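/- Well-definedness of the index: if u ∈ S can be written both as an ordered product u = q 0 * q 1 * ⋯ * q (k−1) and as u = r 0 * r 1 * ⋯ * r (m−1), where k, m ≥ 0 (an empty product equals 1) and every q i and every r j is an irreducible element of S, then k = m. -/

import Mathlib

open scoped BigOperators

/-- `u` divides `w` in `S`: `w ∈ u·S`. -/
def SDvd {G : Type*} [Group G] (S : Submonoid G) (u w : G) : Prop := ∃ s ∈ S, w = u * s

/-- The left set `u·S = {u * s : s ∈ S}`. -/
def leftSet {G : Type*} [Group G] (S : Submonoid G) (u : G) : Set G := {w | ∃ s ∈ S, w = u * s}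

/-- `τ(u)`: the number of ordered factorizations `u = v * w` with `v, w ∈ S`. -/
noncomputable def tau {G : Type*} [Group G] (S : Submonoid G) (u : G) : ℕ :=
  Set.ncard {p : G × G | p.1 ∈ S ∧ p.2 ∈ S ∧ p.1 * p.2 = u}

/-- An integral monoid: a submonoid of a group satisfying Axioms I, II, III. -/
structure IntegralMonoid {G : Type*} [Group G] (S : Submonoid G) : Prop where
  ax1 : ∀ u ∈ S, u⁻¹ ∈ S → u = 1
  ax2 : ∀ u : G, ∃ x ∈ S, ∃ y ∈ S, u = x * y⁻¹ ∧
        ∀ z ∈ S, ∀ w ∈ S, u = z * w⁻¹ → ∃ c ∈ S, z = x * c ∧ w = y * c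
  ax3 : ∀ u ∈ S, {p : G × G | p.1 ∈ S ∧ p.2 ∈ S ∧ p.1 * p.2 = u}.Finite

/-- Axiom IV′ (homogeneity), in the equivalent form proved in the paper. -/
def Homogeneous {G : Type*} [Group G] (S : Submonoid G) : Prop :=
  ∀ w u v : G, w ∈ S → u ∈ S → v ∈ S →
    (∀ d ∈ S, SDvd S d w → SDvd S d u → d = 1) →
    (∀ d ∈ S, SDvd S d w → SDvd S d v → d = 1) →
    leftSet S w ∩ leftSet S u = leftSet S w ∩ leftSet S v → u = v

section AuxLemmas

variable {G : Type*} [Group G] {S : Submonoid G}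

lemma IM.mul_eq_one (hS : IntegralMonoid S) {a b : G} (ha : a ∈ S) (hb : b ∈ S)
    (h : a * b = 1) : a = 1 ∧ b = 1 := by
  have h1 : a⁻¹ = b := inv_eq_of_mul_eq_one_right h
  have ha1 : a = 1 := hS.ax1 a ha (h1 ▸ hb)
  exact ⟨ha1, by simpa [ha1] using h⟩

lemma IM.tau_one (hS : IntegralMonoid S) : tau S (1 : G) = 1 := by
  have hset : {p : G × G | p.1 ∈ S ∧ p.2 ∈ S ∧ p.1 * p.2 = 1} = {((1:G), (1:G))} := by
    ext ⟨a, b⟩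
    simp only [Set.mem_setOf_eq, Set.mem_singleton_iff, Prod.mk.injEq]
    constructor
    · rintro ⟨ha, hb, h⟩; exact IM.mul_eq_one hS ha hb h
    · rintro ⟨rfl, rfl⟩; exact ⟨S.one_mem, S.one_mem, one_mul 1⟩
  unfold tau
  rw [hset, Set.ncard_singleton]

lemma IM.tau_ne_one (hS : IntegralMonoid S) {p : G} (hp2 : tau S p = 2) : p ≠ 1 := by
  rintro rfl
  rw [IM.tau_one hS] at hp2
  omega

lemma IM.two_le_tau (hS : IntegralMonoid S) {u : G} (hu : u ∈ S) (h1 : u ≠ 1) :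
    2 ≤ tau S u := by
  have hsub : ({((1:G), u), (u, (1:G))} : Set (G × G)) ⊆
      {p : G × G | p.1 ∈ S ∧ p.2 ∈ S ∧ p.1 * p.2 = u} := by
    rintro q hq
    rcases hq with rfl | hq
    · exact ⟨S.one_mem, hu, one_mul u⟩
    · rw [Set.mem_singleton_iff] at hq; subst hq
      exact ⟨hu, S.one_mem, mul_one u⟩
  have hne : ((1:G), u) ≠ (u, (1:G)) := by
    intro h
    exact h1 ((Prod.mk.injEq _ _ _ _ ▸ h : (1:G) = u ∧ u = 1).2)
  have := Set.ncard_le_ncard hsub (hS.ax3 u hu)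
  rw [Set.ncard_pair hne] at this
  unfold tau
  omega

lemma IM.dvd_of_tau_two (hS : IntegralMonoid S) {p : G} (hp : p ∈ S) (hp2 : tau S p = 2)
    {d : G} (hd : d ∈ S) (hdvd : SDvd S d p) : d = 1 ∨ d = p := by
  by_contra hcon
  push_neg at hcon
  obtain ⟨e, he, hep⟩ := hdvd
  have hp1 : p ≠ 1 := IM.tau_ne_one hS hp2
  have hsub : ({((1:G), p), (p, (1:G)), (d, e)} : Set (G × G)) ⊆
      {q : G × G | q.1 ∈ S ∧ q.2 ∈ S ∧ q.1 * q.2 = p} := by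
    rintro q hq
    rcases hq with rfl | hq
    · exact ⟨S.one_mem, hp, one_mul p⟩
    rcases hq with rfl | hq
    · exact ⟨hp, S.one_mem, mul_one p⟩
    rw [Set.mem_singleton_iff] at hq; subst hq
    exact ⟨hd, he, hep.symm⟩
  have h3 : ({((1:G), p), (p, (1:G)), (d, e)} : Set (G × G)).ncard = 3 := by
    rw [Set.ncard_insert_of_notMem, Set.ncard_insert_of_notMem, Set.ncard_singleton]
    · intro h
      rw [Set.mem_singleton_iff] at h
      exact hcon.2 ((Prod.mk.injEq _ _ _ _ ▸ h.symm : d = p ∧ e = 1).1)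
    · intro h
      rcases h with h | h
      · exact hp1 ((Prod.mk.injEq _ _ _ _ ▸ h : (1:G) = p ∧ p = 1).2)
      · rw [Set.mem_singleton_iff] at h
        exact hcon.1 ((Prod.mk.injEq _ _ _ _ ▸ h.symm : d = 1 ∧ e = p).1)
  have hle := Set.ncard_le_ncard hsub (hS.ax3 p hp)
  rw [h3] at hle
  unfold tau at hp2
  omega

lemma IM.tau_lt_right (hS : IntegralMonoid S) {a b : G} (ha : a ∈ S) (hb : b ∈ S)
    (ha1 : a ≠ 1) : tau S b < tau S (a * b) := by
  set f : G × G → G × G := fun q => (a * q.1, q.2) with hf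
  have hinj : Function.Injective f := by
    rintro ⟨q1, q2⟩ ⟨r1, r2⟩ h
    simp only [hf, Prod.mk.injEq] at h
    exact Prod.ext (mul_left_cancel h.1) h.2
  have hsub : f '' {q : G × G | q.1 ∈ S ∧ q.2 ∈ S ∧ q.1 * q.2 = b} ⊆
      {q : G × G | q.1 ∈ S ∧ q.2 ∈ S ∧ q.1 * q.2 = a * b} := by
    rintro _ ⟨⟨v, w⟩, ⟨hv, hw, hvw⟩, rfl⟩
    exact ⟨S.mul_mem ha hv, hw, by rw [mul_assoc, hvw]⟩
  have hmem : ((1:G), a * b) ∈ {q : G × G | q.1 ∈ S ∧ q.2 ∈ S ∧ q.1 * q.2 = a * b} :=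
    ⟨S.one_mem, S.mul_mem ha hb, one_mul _⟩
  have hnot : ((1:G), a * b) ∉ f '' {q : G × G | q.1 ∈ S ∧ q.2 ∈ S ∧ q.1 * q.2 = b} := by
    rintro ⟨⟨v, w⟩, ⟨hv, _, _⟩, heq⟩
    simp only [hf, Prod.mk.injEq] at heq
    exact ha1 (IM.mul_eq_one hS ha hv heq.1).1
  have hss : f '' {q : G × G | q.1 ∈ S ∧ q.2 ∈ S ∧ q.1 * q.2 = b} ⊂
      {q : G × G | q.1 ∈ S ∧ q.2 ∈ S ∧ q.1 * q.2 = a * b} :=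
    ⟨hsub, fun hsup => hnot (hsup hmem)⟩
  have hlt := Set.ncard_lt_ncard hss (hS.ax3 (a * b) (S.mul_mem ha hb))
  rw [Set.ncard_image_of_injective _ hinj] at hlt
  unfold tau
  exact hlt

lemma IM.tau_lt_left (hS : IntegralMonoid S) {a b : G} (ha : a ∈ S) (hb : b ∈ S)
    (hb1 : b ≠ 1) : tau S a < tau S (a * b) := by
  set f : G × G → G × G := fun q => (q.1, q.2 * b) with hf
  have hinj : Function.Injective f := by
    rintro ⟨q1, q2⟩ ⟨r1, r2⟩ h
    simp only [hf, Prod.mk.injEq] at h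
    exact Prod.ext h.1 (mul_right_cancel h.2)
  have hsub : f '' {q : G × G | q.1 ∈ S ∧ q.2 ∈ S ∧ q.1 * q.2 = a} ⊆
      {q : G × G | q.1 ∈ S ∧ q.2 ∈ S ∧ q.1 * q.2 = a * b} := by
    rintro _ ⟨⟨v, w⟩, ⟨hv, hw, hvw⟩, rfl⟩
    exact ⟨hv, S.mul_mem hw hb, by rw [← mul_assoc, hvw]⟩
  have hmem : ((a * b : G), (1:G)) ∈ {q : G × G | q.1 ∈ S ∧ q.2 ∈ S ∧ q.1 * q.2 = a * b} :=
    ⟨S.mul_mem ha hb, S.one_mem, mul_one _⟩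
  have hnot : ((a * b : G), (1:G)) ∉ f '' {q : G × G | q.1 ∈ S ∧ q.2 ∈ S ∧ q.1 * q.2 = a} := by
    rintro ⟨⟨v, w⟩, ⟨_, hw, _⟩, heq⟩
    simp only [hf, Prod.mk.injEq] at heq
    exact hb1 (IM.mul_eq_one hS hw hb heq.2).2
  have hss : f '' {q : G × G | q.1 ∈ S ∧ q.2 ∈ S ∧ q.1 * q.2 = a} ⊂
      {q : G × G | q.1 ∈ S ∧ q.2 ∈ S ∧ q.1 * q.2 = a * b} :=
    ⟨hsub, fun hsup => hnot (hsup hmem)⟩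
  have hlt := Set.ncard_lt_ncard hss (hS.ax3 (a * b) (S.mul_mem ha hb))
  rw [Set.ncard_image_of_injective _ hinj] at hlt
  unfold tau
  exact hlt

end AuxLemmas

section MoreAux

variable {G : Type*} [Group G] {S : Submonoid G}

lemma IM.exists_fac (hS : IntegralMonoid S) :
    ∀ n : ℕ, ∀ s ∈ S, tau S s < n →
      ∃ l : List G, (∀ x ∈ l, x ∈ S ∧ tau S x = 2) ∧ l.prod = s := by
  intro n
  induction n with
  | zero => intro s _ h; omega
  | succ n ih =>
    intro s hs h
    by_cases h1 : s = 1
    · exact ⟨[], by simp, by simp [h1]⟩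
    by_cases h2 : tau S s = 2
    · exact ⟨[s], by simp [hs, h2], by simp⟩
    have h2' : 2 ≤ tau S s := IM.two_le_tau hS hs h1
    have hnsub : ¬ ({q : G × G | q.1 ∈ S ∧ q.2 ∈ S ∧ q.1 * q.2 = s} ⊆
        ({((1:G), s), (s, (1:G))} : Set (G × G))) := by
      intro hsub
      have hne : ((1:G), s) ≠ (s, (1:G)) := by
        intro h
        exact h1 ((Prod.mk.injEq _ _ _ _ ▸ h : (1:G) = s ∧ s = 1).2)
      have := Set.ncard_le_ncard hsub (Set.toFinite _)
      rw [Set.ncard_pair hne] at this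
      unfold tau at h2 h2'
      omega
    obtain ⟨⟨a, b⟩, hmem, hnot⟩ := Set.not_subset.mp hnsub
    obtain ⟨haS, hbS, hab⟩ := hmem
    simp only [Set.mem_insert_iff, Set.mem_singleton_iff, Prod.mk.injEq, not_or,
      not_and] at hnot
    have ha1 : a ≠ 1 := by
      rintro rfl
      exact hnot.1 rfl (by simpa using hab)
    have hb1 : b ≠ 1 := by
      rintro rfl
      exact hnot.2 (by simpa using hab) rfl
    have hab' : a * b = s := hab
    have hta : tau S a < n := by
      have := IM.tau_lt_left hS (a := a) (b := b) haS hbS hb1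
      rw [hab'] at this; omega
    have htb : tau S b < n := by
      have := IM.tau_lt_right hS (a := a) (b := b) haS hbS ha1
      rw [hab'] at this; omega
    obtain ⟨la, hla, hpa⟩ := ih a haS hta
    obtain ⟨lb, hlb, hpb⟩ := ih b hbS htb
    refine ⟨la ++ lb, ?_, by rw [List.prod_append, hpa, hpb, hab]⟩
    intro x hx
    rcases List.mem_append.mp hx with h | h
    exacts [hla x h, hlb x h]

lemma IM.exists_lcm (hS : IntegralMonoid S) {a b : G} (ha : a ∈ S) (hb : b ∈ S) :
    ∃ x ∈ S, ∃ y ∈ S, a * x = b * y ∧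
      ∀ z ∈ S, ∀ w ∈ S, a * z = b * w → ∃ c ∈ S, z = x * c ∧ w = y * c := by
  obtain ⟨x, hx, y, hy, hxy, hmin⟩ := hS.ax2 (a⁻¹ * b)
  refine ⟨x, hx, y, hy, ?_, ?_⟩
  · rw [eq_mul_inv_iff_mul_eq] at hxy
    rw [← hxy]
    group
  · intro z hz w hw hzw
    apply hmin z hz w hw
    rw [eq_mul_inv_iff_mul_eq]
    have hz' : z = a⁻¹ * (b * w) := by rw [← hzw]; group
    rw [hz']
    group

lemma IM.complement_div_trivial (hS : IntegralMonoid S) (hhom : Homogeneous S)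
    {p q x y : G} (hp : p ∈ S) (hq : q ∈ S) (hpt : tau S p = 2) (hqt : tau S q = 2)
    (hpq : p ≠ q) (hx : x ∈ S) (hy : y ∈ S) (hL : p * x = q * y)
    (hmin : ∀ z ∈ S, ∀ w ∈ S, p * z = q * w → ∃ c ∈ S, z = x * c ∧ w = y * c)
    {z : G} (hz : z ∈ S) (hdvd : SDvd S z y) : z = 1 ∨ z = y := by
  by_cases hzy : z = y
  · exact Or.inr hzy
  left
  obtain ⟨s, hs, hys⟩ := hdvd
  have hp1 : p ≠ 1 := IM.tau_ne_one hS hpt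
  have hint : leftSet S p ∩ leftSet S q = leftSet S (p * x) := by
    ext m
    constructor
    · rintro ⟨⟨a', ha', rfl⟩, ⟨b', hb', hm⟩⟩
      obtain ⟨c, hc, hac, _⟩ := hmin a' ha' b' hb' hm
      exact ⟨c, hc, by rw [hac, mul_assoc]⟩
    · rintro ⟨c, hc, rfl⟩
      exact ⟨⟨x * c, S.mul_mem hx hc, mul_assoc _ _ _⟩,
        ⟨y * c, S.mul_mem hy hc, by rw [← mul_assoc, ← hL, mul_assoc]⟩⟩
  have hint2 : leftSet S p ∩ leftSet S (q * z) = leftSet S (p * x) := by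
    ext m
    constructor
    · rintro ⟨hm1, ⟨b', hb', rfl⟩⟩
      have hmm : (q * z * b') ∈ leftSet S p ∩ leftSet S q :=
        ⟨hm1, ⟨z * b', S.mul_mem hz hb', by rw [mul_assoc]⟩⟩
      rw [hint] at hmm
      exact hmm
    · rintro ⟨c, hc, rfl⟩
      refine ⟨⟨x * c, S.mul_mem hx hc, mul_assoc _ _ _⟩,
        ⟨s * c, S.mul_mem hs hc, ?_⟩⟩
      rw [hL, hys]
      group
  have hcop1 : ∀ d ∈ S, SDvd S d p → SDvd S d q → d = 1 := by
    intro d hd hdp hdq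
    rcases IM.dvd_of_tau_two hS hp hpt hd hdp with h | h
    · exact h
    rw [h] at hdq
    rcases IM.dvd_of_tau_two hS hq hqt hp hdq with h' | h'
    · exact absurd h' hp1
    · exact absurd h' hpq
  have hcop2 : ∀ d ∈ S, SDvd S d p → SDvd S d (q * z) → d = 1 := by
    intro d hd hdp hdq
    rcases IM.dvd_of_tau_two hS hp hpt hd hdp with h | h
    · exact h
    obtain ⟨e, he, hqe⟩ := hdq
    rw [h] at hqe
    have hmm : (q * z) ∈ leftSet S p ∩ leftSet S q := ⟨⟨e, he, hqe⟩, ⟨z, hz, rfl⟩⟩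
    rw [hint] at hmm
    obtain ⟨c, hc, hqzc⟩ := hmm
    have hzyc : z = y * c := by
      have : q * z = q * (y * c) := by rw [hqzc, hL]; group
      exact mul_left_cancel this
    have hsc : s * c = 1 := by
      have h0 : z * (s * c) = z * 1 := by
        rw [mul_one]
        calc z * (s * c) = (z * s) * c := by group
        _ = y * c := by rw [← hys]
        _ = z := hzyc.symm
      exact mul_left_cancel h0
    have hs1 := (IM.mul_eq_one hS hs hc hsc).1
    exact absurd (by rw [hys, hs1, mul_one] : y = z) (fun h => hzy h.symm)
  have heq := hhom p q (q * z) hp hq (S.mul_mem hq hz) hcop1 hcop2 (by rw [hint, hint2])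
  have : q * 1 = q * z := by rw [mul_one, ← heq]
  exact (mul_left_cancel this).symm

lemma IM.complement_irred (hS : IntegralMonoid S) (hhom : Homogeneous S)
    {p q x y : G} (hp : p ∈ S) (hq : q ∈ S) (hpt : tau S p = 2) (hqt : tau S q = 2)
    (hpq : p ≠ q) (hx : x ∈ S) (hy : y ∈ S) (hL : p * x = q * y)
    (hmin : ∀ z ∈ S, ∀ w ∈ S, p * z = q * w → ∃ c ∈ S, z = x * c ∧ w = y * c) :
    tau S y = 2 := by
  have hp1 : p ≠ 1 := IM.tau_ne_one hS hpt
  have hy1 : y ≠ 1 := by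
    rintro rfl
    have hdq : SDvd S p q := ⟨x, hx, (hL.trans (mul_one q)).symm⟩
    rcases IM.dvd_of_tau_two hS hq hqt hp hdq with h | h
    exacts [hp1 h, hpq h]
  have hdiv := fun {z} (hz : z ∈ S) (hd : SDvd S z y) =>
    IM.complement_div_trivial hS hhom hp hq hpt hqt hpq hx hy hL hmin hz hd
  have hset : {q' : G × G | q'.1 ∈ S ∧ q'.2 ∈ S ∧ q'.1 * q'.2 = y} =
      ({((1:G), y), (y, (1:G))} : Set (G × G)) := by
    ext ⟨d, e⟩
    simp only [Set.mem_setOf_eq, Set.mem_insert_iff, Set.mem_singleton_iff, Prod.mk.injEq]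
    constructor
    · rintro ⟨hd, he, hde⟩
      rcases hdiv hd ⟨e, he, hde.symm⟩ with rfl | rfl
      · left; exact ⟨rfl, by simpa using hde⟩
      · right
        refine ⟨rfl, ?_⟩
        have : d * e = d * 1 := by rw [mul_one, hde]
        exact mul_left_cancel this
    · rintro (⟨rfl, h2⟩ | ⟨h2, rfl⟩)
      · exact ⟨S.one_mem, by rw [h2]; exact hy, by rw [h2, one_mul]⟩
      · exact ⟨by rw [h2]; exact hy, S.one_mem, by rw [h2, mul_one]⟩
  have hne : ((1:G), y) ≠ (y, (1:G)) := by
    intro h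
    exact hy1 ((Prod.mk.injEq _ _ _ _ ▸ h : (1:G) = y ∧ y = 1).2)
  unfold tau
  rw [hset, Set.ncard_pair hne]

end MoreAux

lemma IM.main_aux {G : Type*} [Group G] {S : Submonoid G}
    (hS : IntegralMonoid S) (hhom : Homogeneous S) :
    ∀ n : ℕ, ∀ u : G, u ∈ S → tau S u < n → ∀ l₁ l₂ : List G,
      (∀ x ∈ l₁, x ∈ S ∧ tau S x = 2) → (∀ x ∈ l₂, x ∈ S ∧ tau S x = 2) →
      l₁.prod = u → l₂.prod = u → l₁.length = l₂.length := by
  intro n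
  induction n with
  | zero => intro u _ h; omega
  | succ n ih =>
    intro u hu hn l₁ l₂ h₁ h₂ hp₁ hp₂
    match l₁, l₂, h₁, h₂, hp₁, hp₂ with
    | [], [], _, _, _, _ => rfl
    | [], r :: t₂, h₁, h₂, hp₁, hp₂ =>
      exfalso
      have hu1 : u = 1 := by simpa using hp₁.symm
      have hrS : r ∈ S := (h₂ r (List.mem_cons_self)).1
      have hwS : t₂.prod ∈ S :=
        Submonoid.list_prod_mem S (fun x hx => (h₂ x (List.mem_cons_of_mem _ hx)).1)
      have hr1 : r = 1 := (IM.mul_eq_one hS hrS hwS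
        (by rw [← List.prod_cons, hp₂, hu1])).1
      have := (h₂ r (List.mem_cons_self)).2
      rw [hr1, IM.tau_one hS] at this
      omega
    | p :: t₁, [], h₁, h₂, hp₁, hp₂ =>
      exfalso
      have hu1 : u = 1 := by simpa using hp₂.symm
      have hpS : p ∈ S := (h₁ p (List.mem_cons_self)).1
      have hvS : t₁.prod ∈ S :=
        Submonoid.list_prod_mem S (fun x hx => (h₁ x (List.mem_cons_of_mem _ hx)).1)
      have hq1 : p = 1 := (IM.mul_eq_one hS hpS hvS
        (by rw [← List.prod_cons, hp₁, hu1])).1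
      have := (h₁ p (List.mem_cons_self)).2
      rw [hq1, IM.tau_one hS] at this
      omega
    | p :: t₁, r :: t₂, h₁, h₂, hp₁, hp₂ =>
      obtain ⟨hpS, hpt⟩ := h₁ p (List.mem_cons_self)
      obtain ⟨hrS, hrt⟩ := h₂ r (List.mem_cons_self)
      have h₁' : ∀ x ∈ t₁, x ∈ S ∧ tau S x = 2 :=
        fun x hx => h₁ x (List.mem_cons_of_mem _ hx)
      have h₂' : ∀ x ∈ t₂, x ∈ S ∧ tau S x = 2 :=
        fun x hx => h₂ x (List.mem_cons_of_mem _ hx)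
      have hvS : t₁.prod ∈ S := Submonoid.list_prod_mem S (fun x hx => (h₁' x hx).1)
      have hwS : t₂.prod ∈ S := Submonoid.list_prod_mem S (fun x hx => (h₂' x hx).1)
      have hpu : p * t₁.prod = u := by rw [← List.prod_cons, hp₁]
      have hru : r * t₂.prod = u := by rw [← List.prod_cons, hp₂]
      have hp1 : p ≠ 1 := IM.tau_ne_one hS hpt
      have hr1 : r ≠ 1 := IM.tau_ne_one hS hrt
      have htv : tau S t₁.prod < n := by
        have := IM.tau_lt_right hS hpS hvS hp1
        rw [hpu] at this; omega
      have htw : tau S t₂.prod < n := by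
        have := IM.tau_lt_right hS hrS hwS hr1
        rw [hru] at this; omega
      by_cases hpr : p = r
      · subst hpr
        have hvw : t₁.prod = t₂.prod := mul_left_cancel (by rw [hpu, hru])
        have := ih t₁.prod hvS htv t₁ t₂ h₁' h₂' rfl hvw.symm
        simp only [List.length_cons, this]
      · obtain ⟨x, hx, y, hy, hL, hmin⟩ := IM.exists_lcm hS hpS hrS
        obtain ⟨c, hc, hvc, hwc⟩ := hmin t₁.prod hvS t₂.prod hwS (by rw [hpu, hru])
        have hmin' : ∀ z ∈ S, ∀ w ∈ S, r * z = p * w → ∃ c ∈ S, z = y * c ∧ w = x * c := by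
          intro z hz w hw h
          obtain ⟨c', hc', h1, h2⟩ := hmin w hw z hz h.symm
          exact ⟨c', hc', h2, h1⟩
        have hyt : tau S y = 2 :=
          IM.complement_irred hS hhom hpS hrS hpt hrt hpr hx hy hL hmin
        have hxt : tau S x = 2 :=
          IM.complement_irred hS hhom hrS hpS hrt hpt (Ne.symm hpr) hy hx hL.symm hmin'
        obtain ⟨C, hC, hCp⟩ := IM.exists_fac hS (tau S c + 1) c hc (Nat.lt_succ_self _)
        have e₁ := ih t₁.prod hvS htv t₁ (x :: C) h₁'
          (by
            intro z hz
            rcases List.mem_cons.mp hz with rfl | hz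
            · exact ⟨hx, hxt⟩
            · exact hC z hz)
          rfl (by rw [List.prod_cons, hCp, ← hvc])
        have e₂ := ih t₂.prod hwS htw t₂ (y :: C) h₂'
          (by
            intro z hz
            rcases List.mem_cons.mp hz with rfl | hz
            · exact ⟨hy, hyt⟩
            · exact hC z hz)
          rfl (by rw [List.prod_cons, hCp, ← hwc])
        simp only [List.length_cons] at e₁ e₂ ⊢
        omega

theorem index_well_defined {G : Type*} [Group G] (S : Submonoid G)
    (hS : IntegralMonoid S) (hhom : Homogeneous S)
    (u : G) (hu : u ∈ S) (l₁ l₂ : List G)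
    (h₁ : ∀ x ∈ l₁, x ∈ S ∧ tau S x = 2) (h₂ : ∀ x ∈ l₂, x ∈ S ∧ tau S x = 2)
    (hp₁ : l₁.prod = u) (hp₂ : l₂.prod = u) :
    l₁.length = l₂.length :=
  IM.main_aux hS hhom (tau S u + 1) u hu (Nat.lt_succ_self _) l₁ l₂ h₁ h₂ hp₁ hp₂
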